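/- Let p and q be distinct squares of the n×n board that do not lie on a common row, column, or diagonal. Then the number of squares of the board attacked simultaneously by a queen on p and a queen on q is at most 12. -/

import Mathlib

/-- The n×n board: squares (x,y) ∈ ℤ×ℤ with 1 ≤ x ≤ n and 1 ≤ y ≤ n. -/
noncomputable def board (n : ℕ) : Finset (ℤ × ℤ) := Finset.Icc 1 (n : ℤ) ×ˢ Finset.Icc 1 (n : ℤ)

/-- A line of the board: a row (fixed y), a column (fixed x), a positive
diagonal (fixed x − y), or a negative diagonal (fixed x + y). -/
inductive Line : Type where
  | row : ℤ → Line
  | col : ℤ → Line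
  | posDiag : ℤ → Line
  | negDiag : ℤ → Line
deriving DecidableEq

/-- The defining condition for a point to be on a given line. -/
def Line.pred : Line → ℤ × ℤ → Prop
  | .row b, p => p.2 = b
  | .col a, p => p.1 = a
  | .posDiag d, p => p.1 - p.2 = d
  | .negDiag s, p => p.1 + p.2 = s

instance (L : Line) (p : ℤ × ℤ) : Decidable (L.pred p) :=
  match L with
  | .row b => inferInstanceAs (Decidable (p.2 = b))
  | .col a => inferInstanceAs (Decidable (p.1 = a))
  | .posDiag d => inferInstanceAs (Decidable (p.1 - p.2 = d))
  | .negDiag s => inferInstanceAs (Decidable (p.1 + p.2 = s))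

/-- The set of squares of the n×n board lying on a line. -/
noncomputable def Line.squares (n : ℕ) (L : Line) : Finset (ℤ × ℤ) := (board n).filter L.pred

/-- The length of a line: its number of board squares. -/
noncomputable def Line.length (n : ℕ) (L : Line) : ℕ := (L.squares n).card

/-- Whether a line is a diagonal (of either orientation). -/
def Line.isDiag : Line → Prop
  | .posDiag _ => True
  | .negDiag _ => True
  | _ => False

/-- The set of board squares attacked by a placement S of queens: squares q on
the board such that some queen p ∈ S with p ≠ q shares a row, column, or
diagonal with q. -/
noncomputable def attacked (n : ℕ) (S : Finset (ℤ × ℤ)) : Finset (ℤ × ℤ) :=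
  S.biUnion fun p => (board n).filter fun q =>
    q ≠ p ∧ (p.1 = q.1 ∨ p.2 = q.2 ∨ p.1 - p.2 = q.1 - q.2 ∨ p.1 + p.2 = q.1 + q.2)

/-- G(m) = ⌊m²/12⌋ + 1 if m ≡ 3, 6, 9 (mod 12) or m = 10; ⌊m²/12⌋ otherwise. -/
def G (m : ℕ) : ℕ :=
  if m % 12 = 3 ∨ m % 12 = 6 ∨ m % 12 = 9 ∨ m = 10 then m ^ 2 / 12 + 1 else m ^ 2 / 12

/-- Condition that `r` lies on the line of type `i` through `c`. -/
def lcond (c r : ℤ × ℤ) (i : Fin 4) : Prop :=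
  if i = 0 then r.2 = c.2 else if i = 1 then r.1 = c.1
  else if i = 2 then r.1 - r.2 = c.1 - c.2 else r.1 + r.2 = c.1 + c.2

/-- The type of (a) line through `c` containing `r`. -/
noncomputable def lidx (c r : ℤ × ℤ) : Fin 4 := by
  classical
  exact if r.2 = c.2 then 0 else if r.1 = c.1 then 1
    else if r.1 - r.2 = c.1 - c.2 then 2 else 3

lemma lidx_cond (c r : ℤ × ℤ)
    (h : c.1 = r.1 ∨ c.2 = r.2 ∨ c.1 - c.2 = r.1 - r.2 ∨ c.1 + c.2 = r.1 + r.2) :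
    lcond c r (lidx c r) := by
  unfold lidx lcond
  split_ifs with h1 h2 h3 <;> simp_all <;> omega

/-- Two queens on distinct squares of the n×n board sharing no
row, column, or diagonal attack at most 12 squares in common. -/
theorem common_attacked_squares_le_twelve (n : ℕ) (p q : ℤ × ℤ)
    (hp : p ∈ board n) (hq : q ∈ board n) (hne : p ≠ q)
    (hrow : p.2 ≠ q.2) (hcol : p.1 ≠ q.1)
    (hpos : p.1 - p.2 ≠ q.1 - q.2) (hneg : p.1 + p.2 ≠ q.1 + q.2) :
    (attacked n {p} ∩ attacked n {q}).card ≤ 12 := by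
  classical
  have hmem : ∀ r ∈ attacked n {p} ∩ attacked n {q},
      lcond p r (lidx p r) ∧ lcond q r (lidx q r) := by
    intro r hr
    rw [Finset.mem_inter] at hr
    obtain ⟨h1, h2⟩ := hr
    simp only [attacked, Finset.mem_biUnion, Finset.mem_singleton, Finset.mem_filter] at h1 h2
    obtain ⟨_, rfl, _, _, hd1⟩ := h1
    obtain ⟨_, rfl, _, _, hd2⟩ := h2
    exact ⟨lidx_cond _ _ hd1, lidx_cond _ _ hd2⟩
  have hne' : ∀ r ∈ attacked n {p} ∩ attacked n {q}, lidx p r ≠ lidx q r := by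
    intro r hr heq
    obtain ⟨c1, c2⟩ := hmem r hr
    rw [heq] at c1
    revert c1 c2
    unfold lcond
    generalize lidx q r = j
    fin_cases j <;> simp <;> omega
  set T : Finset (Fin 4 × Fin 4) := Finset.univ.filter (fun ij => ij.1 ≠ ij.2) with hT
  have hTcard : T.card = 12 := by decide
  rw [← hTcard]
  apply Finset.card_le_card_of_injOn (fun r => (lidx p r, lidx q r))
  · intro r hr
    simp only [hT, Finset.mem_coe, Finset.mem_filter, Finset.mem_univ, true_and]
    exact hne' r hr
  · intro r hr s hs hf
    have hij : lidx p r ≠ lidx q r := hne' r hr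
    obtain ⟨cr1, cr2⟩ := hmem r hr
    obtain ⟨cs1, cs2⟩ := hmem s hs
    have e1 : lidx p r = lidx p s := congrArg Prod.fst hf
    have e2 : lidx q r = lidx q s := congrArg Prod.snd hf
    rw [← e1] at cs1
    rw [← e2] at cs2
    revert cr1 cr2 cs1 cs2 hij
    unfold lcond
    generalize lidx p r = i at *
    generalize lidx q r = j at *
    fin_cases i <;> fin_cases j <;> simp <;>
      (intros; apply Prod.ext <;> omega)
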